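/- Let λ > 0 and z > 0, and let σ be a random variable with density r ↦ λ·p(r, z, λr) on (0,∞), where p(r,z,λr) = (2πr)^{-1/2} exp(−(z−λr)²/(2r)). Then this density integrates to 1, i.e. λ·∫_0^∞ p(r, z, λr) dr = 1. -/

import Mathlib

open MeasureTheory Real

/-- Gaussian density with variance `t` and mean `m`, evaluated at `x`. -/
noncomputable def gaussDensity (t x m : ℝ) : ℝ :=
  Real.exp (-(x - m) ^ 2 / (2 * t)) / Real.sqrt (2 * Real.pi * t)

open Set Filter Topology

noncomputable def stdPhi (x : ℝ) : ℝ := Real.exp (-x ^ 2 / 2) / Real.sqrt (2 * Real.pi)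

lemma stdPhi_eq : stdPhi = fun x => Real.exp (-(1/2) * x ^ 2) / Real.sqrt (2 * Real.pi) := by
  funext x; simp only [stdPhi]; ring_nf

lemma stdPhi_continuous : Continuous stdPhi := by
  apply Continuous.div_const
  exact (continuous_id.pow 2 |>.neg.div_const 2).rexp

lemma stdPhi_integrable : Integrable stdPhi := by
  rw [stdPhi_eq]
  exact (integrable_exp_neg_mul_sq (by norm_num)).div_const _

lemma stdPhi_nonneg (x : ℝ) : 0 ≤ stdPhi x := by
  unfold stdPhi; positivity

noncomputable def stdCDF (x : ℝ) : ℝ := ∫ t in Iic x, stdPhi t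

lemma sqrt_two_pi_pos : 0 < Real.sqrt (2 * Real.pi) := by
  apply Real.sqrt_pos.2; positivity

lemma integral_stdPhi_Ioi : ∫ t in Ioi (0:ℝ), stdPhi t = 1/2 := by
  rw [stdPhi_eq]
  rw [integral_div, integral_gaussian_Ioi]
  rw [show Real.pi / (1/2) = 2 * Real.pi by ring]
  rw [div_div, div_eq_iff (by positivity)]
  ring

lemma integral_stdPhi : ∫ t, stdPhi t = 1 := by
  simp only [stdPhi_eq, integral_div, integral_gaussian]
  rw [show Real.pi / (1/2) = 2 * Real.pi by ring]
  exact div_self (ne_of_gt sqrt_two_pi_pos)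

lemma integral_stdPhi_Iic : ∫ t in Iic (0:ℝ), stdPhi t = 1/2 := by
  have h := intervalIntegral.integral_Iic_add_Ioi (b := (0:ℝ)) (μ := volume) stdPhi_integrable.integrableOn
    stdPhi_integrable.integrableOn
  rw [integral_stdPhi, integral_stdPhi_Ioi] at h
  linarith

lemma stdCDF_eq (x : ℝ) : stdCDF x = stdCDF 0 + ∫ t in (0:ℝ)..x, stdPhi t := by
  have := intervalIntegral.integral_Iic_sub_Iic (stdPhi_integrable.integrableOn (s := Iic 0))
    (stdPhi_integrable.integrableOn (s := Iic x))
  unfold stdCDF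
  linarith [this]

lemma stdCDF_hasDerivAt (x : ℝ) : HasDerivAt stdCDF (stdPhi x) x := by
  have h : HasDerivAt (fun u => ∫ t in (0:ℝ)..u, stdPhi t) (stdPhi x) x :=
    intervalIntegral.integral_hasDerivAt_right (stdPhi_integrable.intervalIntegrable)
      (stdPhi_continuous.aestronglyMeasurable.stronglyMeasurableAtFilter)
      stdPhi_continuous.continuousAt
  have : stdCDF = fun u => stdCDF 0 + ∫ t in (0:ℝ)..u, stdPhi t := funext stdCDF_eq
  rw [this]
  simpa using (h.const_add (stdCDF 0))

lemma stdCDF_tendsto_atTop : Tendsto stdCDF atTop (𝓝 1) := by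
  have h : Tendsto (fun u => ∫ t in (0:ℝ)..u, stdPhi t) atTop (𝓝 (∫ t in Ioi (0:ℝ), stdPhi t)) :=
    intervalIntegral_tendsto_integral_Ioi 0 stdPhi_integrable.integrableOn tendsto_id
  have h2 : Tendsto stdCDF atTop (𝓝 (stdCDF 0 + ∫ t in Ioi (0:ℝ), stdPhi t)) :=
    (tendsto_const_nhds.add h).congr fun u => (stdCDF_eq u).symm
  have : stdCDF 0 + ∫ t in Ioi (0:ℝ), stdPhi t = 1 := by
    unfold stdCDF; rw [integral_stdPhi_Iic, integral_stdPhi_Ioi]; norm_num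
  rwa [this] at h2

lemma stdCDF_tendsto_atBot : Tendsto stdCDF atBot (𝓝 0) := by
  have h : Tendsto (fun u => ∫ t in u..(0:ℝ), stdPhi t) atBot (𝓝 (∫ t in Iic (0:ℝ), stdPhi t)) :=
    intervalIntegral_tendsto_integral_Iic 0 stdPhi_integrable.integrableOn tendsto_id
  have h2 : Tendsto stdCDF atBot (𝓝 (stdCDF 0 - ∫ t in Iic (0:ℝ), stdPhi t)) := by
    refine (tendsto_const_nhds.sub h).congr fun u => ?_
    rw [stdCDF_eq u, intervalIntegral.integral_symm]; ring
  have : stdCDF 0 - ∫ t in Iic (0:ℝ), stdPhi t = 0 := by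
    unfold stdCDF; rw [integral_stdPhi_Iic]; norm_num
  rwa [this] at h2

noncomputable def igCDF (lam z r : ℝ) : ℝ :=
  if 0 < r then
    stdCDF (lam * Real.sqrt r - z / Real.sqrt r)
      - Real.exp (2 * lam * z) * stdCDF (-(lam * Real.sqrt r + z / Real.sqrt r))
  else 0

lemma igCDF_hasDerivAt (lam z : ℝ) (hlam : 0 < lam) (hz : 0 < z) {r : ℝ} (hr : 0 < r) :
    HasDerivAt (igCDF lam z) (lam * gaussDensity r z (lam * r)) r := by
  set s := Real.sqrt r with hs_def
  have hs : 0 < s := Real.sqrt_pos.2 hr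
  have hs2 : s ^ 2 = r := Real.sq_sqrt hr.le
  have hsqrt : HasDerivAt Real.sqrt (1 / (2 * s)) r := Real.hasDerivAt_sqrt hr.ne'
  have hu : HasDerivAt (fun t => lam * Real.sqrt t - z / Real.sqrt t)
      (lam * (1 / (2 * s)) - z * (-(1 / (2 * s)) / s ^ 2)) r := by
    have h1 := hsqrt.const_mul lam
    have h2 : HasDerivAt (fun t => z / Real.sqrt t) (z * (-(1 / (2 * s)) / s ^ 2)) r := by
      simpa [div_eq_mul_inv] using ((hsqrt.inv hs.ne').const_mul z)
    exact h1.sub h2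
  have hv : HasDerivAt (fun t => -(lam * Real.sqrt t + z / Real.sqrt t))
      (-(lam * (1 / (2 * s)) + z * (-(1 / (2 * s)) / s ^ 2))) r := by
    have h1 := hsqrt.const_mul lam
    have h2 : HasDerivAt (fun t => z / Real.sqrt t) (z * (-(1 / (2 * s)) / s ^ 2)) r := by
      simpa [div_eq_mul_inv] using ((hsqrt.inv hs.ne').const_mul z)
    exact (h1.add h2).neg
  have hCu := (stdCDF_hasDerivAt (lam * s - z / s)).comp r hu
  have hCv := (stdCDF_hasDerivAt (-(lam * s + z / s))).comp r hv
  have hG : HasDerivAt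
      (fun t => stdCDF (lam * Real.sqrt t - z / Real.sqrt t)
        - Real.exp (2 * lam * z) * stdCDF (-(lam * Real.sqrt t + z / Real.sqrt t)))
      (stdPhi (lam * s - z / s) * (lam * (1 / (2 * s)) - z * (-(1 / (2 * s)) / s ^ 2))
        - Real.exp (2 * lam * z) * (stdPhi (-(lam * s + z / s))
          * (-(lam * (1 / (2 * s)) + z * (-(1 / (2 * s)) / s ^ 2))))) r :=
    hCu.sub (hCv.const_mul _)
  have heq : igCDF lam z =ᶠ[nhds r]
      fun t => stdCDF (lam * Real.sqrt t - z / Real.sqrt t)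
        - Real.exp (2 * lam * z) * stdCDF (-(lam * Real.sqrt t + z / Real.sqrt t)) := by
    filter_upwards [Ioi_mem_nhds hr] with t ht
    simp only [igCDF, if_pos (Set.mem_Ioi.mp ht)]
  have hG' := hG.congr_of_eventuallyEq heq
  convert hG' using 1
  case e'_4 => rfl
  case e'_5 => rfl
  have key : Real.exp (2 * lam * z) * stdPhi (-(lam * s + z / s)) = stdPhi (lam * s - z / s) := by
    unfold stdPhi
    rw [mul_div_assoc', ← Real.exp_add]
    congr 1
    field_simp
    ring
  have expand : stdPhi (lam * s - z / s) * (lam * (1 / (2 * s)) - z * (-(1 / (2 * s)) / s ^ 2))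
      - Real.exp (2 * lam * z) * (stdPhi (-(lam * s + z / s))
        * (-(lam * (1 / (2 * s)) + z * (-(1 / (2 * s)) / s ^ 2))))
      = stdPhi (lam * s - z / s) * ((lam * (1 / (2 * s)) - z * (-(1 / (2 * s)) / s ^ 2))
        + (lam * (1 / (2 * s)) + z * (-(1 / (2 * s)) / s ^ 2))) := by
    rw [← key]; ring
  rw [expand]
  have hE : -(lam * s - z / s) ^ 2 / 2 = -(z - lam * r) ^ 2 / (2 * r) := by
    rw [← hs2]; field_simp; ring
  unfold stdPhi gaussDensity
  rw [hE, Real.sqrt_mul (by positivity : (0:ℝ) ≤ 2 * Real.pi) r, ← hs_def]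
  have h2pi := sqrt_two_pi_pos
  field_simp
  ring

lemma igCDF_continuousWithinAt (lam z : ℝ) (hlam : 0 < lam) (hz : 0 < z) :
    ContinuousWithinAt (igCDF lam z) (Ici 0) 0 := by
  rw [← continuousWithinAt_Ioi_iff_Ici]
  have h0 : igCDF lam z 0 = 0 := by simp [igCDF]
  unfold ContinuousWithinAt
  rw [h0]
  have hsqrt0 : Tendsto (fun r : ℝ => Real.sqrt r) (𝓝[>] (0:ℝ)) (𝓝[>] (0:ℝ)) := by
    refine tendsto_nhdsWithin_iff.mpr ⟨?_, ?_⟩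
    · exact (Real.continuous_sqrt.tendsto' 0 0 Real.sqrt_zero).mono_left nhdsWithin_le_nhds
    · filter_upwards [self_mem_nhdsWithin] with t ht
      exact Real.sqrt_pos.2 ht
  have hinv : Tendsto (fun r : ℝ => (Real.sqrt r)⁻¹) (𝓝[>] (0:ℝ)) atTop :=
    tendsto_inv_nhdsGT_zero.comp hsqrt0
  have hzdiv : Tendsto (fun r : ℝ => z / Real.sqrt r) (𝓝[>] (0:ℝ)) atTop := by
    simpa [div_eq_mul_inv] using hinv.const_mul_atTop hz
  have hlamsqrt : Tendsto (fun r : ℝ => lam * Real.sqrt r) (𝓝[>] (0:ℝ)) (𝓝 0) := by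
    have := ((Real.continuous_sqrt.tendsto' 0 0 Real.sqrt_zero).mono_left
      (nhdsWithin_le_nhds (s := Ioi (0:ℝ)))).const_mul lam
    simpa using this
  have hu_bot : Tendsto (fun r : ℝ => lam * Real.sqrt r - z / Real.sqrt r) (𝓝[>] (0:ℝ)) atBot := by
    have := hlamsqrt.add_atBot (tendsto_neg_atTop_atBot.comp hzdiv)
    simpa [sub_eq_add_neg, Function.comp] using this
  have hv_bot : Tendsto (fun r : ℝ => -(lam * Real.sqrt r + z / Real.sqrt r))
      (𝓝[>] (0:ℝ)) atBot := by
    have := (hlamsqrt.neg).add_atBot (tendsto_neg_atTop_atBot.comp hzdiv)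
    refine this.congr fun r => ?_
    simp only [Function.comp_apply, div_eq_mul_inv]
    ring
  have hmain : Tendsto (fun r : ℝ => stdCDF (lam * Real.sqrt r - z / Real.sqrt r)
      - Real.exp (2 * lam * z) * stdCDF (-(lam * Real.sqrt r + z / Real.sqrt r)))
      (𝓝[>] (0:ℝ)) (𝓝 (0 - Real.exp (2 * lam * z) * 0)) :=
    (stdCDF_tendsto_atBot.comp hu_bot).sub ((stdCDF_tendsto_atBot.comp hv_bot).const_mul _)
  refine Tendsto.congr' ?_ (by simpa using hmain)
  filter_upwards [self_mem_nhdsWithin] with t ht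
  simp only [igCDF, if_pos (Set.mem_Ioi.mp ht)]
  ring_nf

lemma igCDF_tendsto_atTop (lam z : ℝ) (hlam : 0 < lam) (hz : 0 < z) :
    Tendsto (igCDF lam z) atTop (𝓝 1) := by
  have hsqrt_top : Tendsto Real.sqrt atTop atTop := by
    refine tendsto_atTop_atTop.mpr fun b => ⟨b ^ 2, fun a ha => ?_⟩
    calc b ≤ |b| := le_abs_self b
      _ = Real.sqrt (b ^ 2) := (Real.sqrt_sq_eq_abs b).symm
      _ ≤ Real.sqrt a := Real.sqrt_le_sqrt ha
  have hlam_top : Tendsto (fun r : ℝ => lam * Real.sqrt r) atTop atTop :=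
    hsqrt_top.const_mul_atTop hlam
  have hzdiv0 : Tendsto (fun r : ℝ => z / Real.sqrt r) atTop (𝓝 0) := by
    have := (hsqrt_top.inv_tendsto_atTop).const_mul z
    simpa [div_eq_mul_inv] using this
  have hu_top : Tendsto (fun r : ℝ => lam * Real.sqrt r - z / Real.sqrt r) atTop atTop := by
    have := hlam_top.atTop_add hzdiv0.neg
    simpa [sub_eq_add_neg] using this
  have hv_bot : Tendsto (fun r : ℝ => -(lam * Real.sqrt r + z / Real.sqrt r)) atTop atBot := by
    have := hzdiv0.neg.add_atBot (tendsto_neg_atTop_atBot.comp hlam_top)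
    refine this.congr fun r => ?_
    simp only [Function.comp_apply]
    ring
  have hmain : Tendsto (fun r : ℝ => stdCDF (lam * Real.sqrt r - z / Real.sqrt r)
      - Real.exp (2 * lam * z) * stdCDF (-(lam * Real.sqrt r + z / Real.sqrt r)))
      atTop (𝓝 (1 - Real.exp (2 * lam * z) * 0)) :=
    (stdCDF_tendsto_atTop.comp hu_top).sub ((stdCDF_tendsto_atBot.comp hv_bot).const_mul _)
  refine Tendsto.congr' ?_ (by simpa using hmain)
  filter_upwards [Ioi_mem_atTop 0] with t ht
  simp only [igCDF, if_pos (Set.mem_Ioi.mp ht)]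
  ring_nf

theorem stmt_3 (lam z : ℝ) (hlam : 0 < lam) (hz : 0 < z) :
    lam * ∫ r in Set.Ioi (0 : ℝ), gaussDensity r z (lam * r) = 1 := by
  rw [← MeasureTheory.integral_const_mul]
  rw [MeasureTheory.integral_Ioi_of_hasDerivAt_of_nonneg
    (igCDF_continuousWithinAt lam z hlam hz)
    (fun x hx => igCDF_hasDerivAt lam z hlam hz (Set.mem_Ioi.mp hx))
    (fun x hx => by unfold gaussDensity; positivity)
    (igCDF_tendsto_atTop lam z hlam hz)]
  simp [igCDF]
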